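/- Let d be a positive integer, (β_n)_{n≥0} a sequence of nonnegative reals, and p > 1. Let ι = Σ_{n∈ℕ} (Fin n → Fin d). Given n, n' ∈ ℕ and vectors a_1,…,a_n ∈ ℝ^d and b_1,…,b_{n'} ∈ ℝ^d, define u, v ∈ ℓ²(ι) by u(n, k) = √β_n · (p^{n+1}/(p−1)) · ∏_{j=1}^n (a_j)_{k(j)} for every k : Fin n → Fin d and u = 0 at every index whose first component differs from n, and analogously v supported at level n' built from b_1,…,b_{n'}. Then ⟨u, v⟩_{ℓ²} = 0 if n ≠ n', and ⟨u, v⟩_{ℓ²} = β_n · (p^{2n+2}/(p−1)²) · ∏_{j=1}^n ⟨a_j, b_j⟩ if n = n'. -/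

import Mathlib

open scoped ENNReal RealInnerProductSpace

/-- The randomized feature-map estimate built from `n` noisy copies `a 0, …, a (n-1)`
of an instance: the element of `ℓ²(Σ m, Fin m → Fin d)` supported on level `n`, whose
entry at index `(n, k)` is `√β_n · (p^(n+1)/(p-1)) · ∏_{j<n} (a j)_{k(j)}`. -/
noncomputable def featureEstimate (d : ℕ) (β : ℕ → ℝ) (p : ℝ) (n : ℕ)
    (a : ℕ → EuclideanSpace ℝ (Fin d)) :
    lp (fun _ : (Σ m : ℕ, (Fin m → Fin d)) => ℝ) 2 :=
  ∑ k : Fin n → Fin d,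
    (Real.sqrt (β n) * (p ^ (n + 1) / (p - 1)) * ∏ j : Fin n, a j (k j)) •
      lp.single 2 (⟨n, k⟩ : Σ m : ℕ, (Fin m → Fin d)) (1 : ℝ)

/-- **Lemma 4 (correctness of the `Prod` subroutine).** For the randomized
feature-map estimates `u`, `v` built at levels `n`, `n'` from vectors
`a_1,…,a_n` and `b_1,…,b_{n'}` of `ℝ^d`, the `ℓ²` inner product `⟨u, v⟩` is `0`
when `n ≠ n'`, and equals `β_n · (p^(2n+2)/(p-1)²) · ∏_{j=1}^n ⟨a_j, b_j⟩`
when `n = n'`. -/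
lemma featureEstimate_inner (d : ℕ) (β : ℕ → ℝ) (p : ℝ)
    (n n' : ℕ) (a b : ℕ → EuclideanSpace ℝ (Fin d)) :
    ⟪featureEstimate d β p n a, featureEstimate d β p n' b⟫
      = ∑ k : Fin n → Fin d, ∑ k' : Fin n' → Fin d,
        ((Real.sqrt (β n) * (p ^ (n + 1) / (p - 1)) * ∏ j : Fin n, a j (k j)) *
         (Real.sqrt (β n') * (p ^ (n' + 1) / (p - 1)) * ∏ j : Fin n', b j (k' j))) *
        (if (⟨n, k⟩ : Σ m : ℕ, (Fin m → Fin d)) = ⟨n', k'⟩ then 1 else 0) := by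
  rw [featureEstimate, featureEstimate, sum_inner]
  refine Finset.sum_congr rfl fun k _ => ?_
  rw [inner_sum]
  refine Finset.sum_congr rfl fun k' _ => ?_
  rw [real_inner_smul_left, real_inner_smul_right, lp.inner_single_left]
  rw [lp.single_apply]
  split_ifs with h
  · simp [eq_rec_constant, h]
  · simp [h]

theorem prod_subroutine_correct
    (d : ℕ) (hd : 0 < d) (β : ℕ → ℝ) (hβ : ∀ n, 0 ≤ β n) (p : ℝ) (hp : 1 < p)
    (n n' : ℕ) (a b : ℕ → EuclideanSpace ℝ (Fin d)) :
    (n ≠ n' → ⟪featureEstimate d β p n a, featureEstimate d β p n' b⟫ = 0) ∧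
    (n = n' → ⟪featureEstimate d β p n a, featureEstimate d β p n' b⟫
      = β n * (p ^ (2 * n + 2) / (p - 1) ^ 2) *
          ∏ j ∈ Finset.range n, ⟪a j, b j⟫) := by
  rw [featureEstimate_inner]
  constructor
  · intro hne
    refine Finset.sum_eq_zero fun k _ => Finset.sum_eq_zero fun k' _ => ?_
    have : (⟨n, k⟩ : Σ m : ℕ, (Fin m → Fin d)) ≠ ⟨n', k'⟩ := by
      intro h; exact hne (congrArg Sigma.fst h)
    simp [this]
  · rintro rfl
    have hdiag : ∀ k k' : Fin n → Fin d,
        ((⟨n, k⟩ : Σ m : ℕ, (Fin m → Fin d)) = ⟨n, k'⟩) ↔ k = k' := by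
      intro k k'
      constructor
      · intro h; exact eq_of_heq (Sigma.mk.inj_iff.mp h).2
      · rintro rfl; rfl
    have h1 : ∀ k : Fin n → Fin d, ∑ k' : Fin n → Fin d,
        ((Real.sqrt (β n) * (p ^ (n + 1) / (p - 1)) * ∏ j : Fin n, a j (k j)) *
         (Real.sqrt (β n) * (p ^ (n + 1) / (p - 1)) * ∏ j : Fin n, b j (k' j))) *
        (if (⟨n, k⟩ : Σ m : ℕ, (Fin m → Fin d)) = ⟨n, k'⟩ then 1 else 0)
        = (Real.sqrt (β n) * (p ^ (n + 1) / (p - 1)))^2 *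
          ∏ j : Fin n, (a j (k j) * b j (k j)) := by
      intro k
      rw [Finset.sum_eq_single k]
      · simp [hdiag, Finset.prod_mul_distrib]; ring
      · intro k' _ hk'
        simp [hdiag, Ne.symm hk']
      · simp
    rw [Finset.sum_congr rfl fun k _ => h1 k, ← Finset.mul_sum]
    have hsum : ∑ k : Fin n → Fin d, ∏ j : Fin n, (a j (k j) * b j (k j))
        = ∏ j : Fin n, ∑ i : Fin d, a j i * b j i := by
      rw [Finset.prod_univ_sum, Fintype.piFinset_univ]
    rw [hsum]
    have hβs : Real.sqrt (β n) ^ 2 = β n := Real.sq_sqrt (hβ n)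
    have hinner : ∀ j : Fin n, (∑ i : Fin d, a j i * b j i) = ⟪a (j : ℕ), b (j : ℕ)⟫ := by
      intro j; simp [PiLp.inner_apply, RCLike.inner_apply, mul_comm]
    rw [Finset.prod_congr rfl fun j _ => hinner j, Fin.prod_univ_eq_prod_range (fun j => ⟪a j, b j⟫)]
    rw [mul_pow, hβs, div_pow, ← pow_mul]
    ring_nf
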